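/- Let f be a twice differentiable, strictly positive function on [a,b] with f'(a) > 0 and f'' ≥ 0, and assume in addition that log∘f is convex on [a,b]. Then for each n ∈ ℕ (n ≥ 1): (1 - f(a)/f(b))^{n+1} ≤ (n!/(n+1)^{n-1})·( ((f'(b))ⁿ/(f'(a))ⁿ)·log(f(b)/f(a)) - (b-a)·f'(a)/f(b) ). -/

import Mathlib

lemma aux_nat_pow : ∀ m : ℕ, (m + 2) ^ m ≤ (m + 1) ^ (m + 1) := by
  intro m
  induction m with
  | zero => norm_num
  | succ m ih =>
    have h1 : (m + 3) ^ (m + 1) * (m + 1) ^ (m + 1) ≤ (m + 2) ^ (m + 2) * (m + 2) ^ m := by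
      rw [← mul_pow, ← pow_add]
      calc ((m + 3) * (m + 1)) ^ (m + 1) ≤ ((m + 2) ^ 2) ^ (m + 1) :=
            Nat.pow_le_pow_left (by nlinarith) _
        _ = (m + 2) ^ (m + 2 + m) := by rw [← pow_mul]; ring_nf
    have h2 : (m + 2) ^ (m + 2) * (m + 2) ^ m ≤ (m + 2) ^ (m + 2) * (m + 1) ^ (m + 1) :=
      Nat.mul_le_mul_left _ ih
    have h3 := h1.trans h2
    have hpos : 0 < (m + 1) ^ (m + 1) := Nat.pow_pos (Nat.succ_pos m)
    calc (m + 1 + 2) ^ (m + 1) = (m + 3) ^ (m + 1) := by ring_nf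
      _ ≤ (m + 2) ^ (m + 2) := Nat.le_of_mul_le_mul_right h3 hpos
      _ = (m + 1 + 1) ^ (m + 1 + 1) := by ring_nf

lemma aux_real_pow (n : ℕ) (hn : 1 ≤ n) : ((n : ℝ) + 1) ^ (n - 1) ≤ (n : ℝ) ^ n := by
  obtain ⟨m, rfl⟩ : ∃ m, n = m + 1 := ⟨n - 1, (Nat.succ_pred_eq_of_pos hn).symm⟩
  have h := aux_nat_pow m
  have h2 := Nat.cast_le (α := ℝ) |>.mpr h
  push_cast at h2 ⊢
  convert h2 using 2
  · rfl
  · ring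

lemma aux_exp (x : ℝ) (hx : 0 ≤ x) (n : ℕ) (hn : 1 ≤ n) :
    1 + x ^ n / n.factorial ≤ Real.exp x := by
  have h := Real.sum_le_exp_of_nonneg hx (n + 1)
  have hsub : ({0, n} : Finset ℕ) ⊆ Finset.range (n + 1) := by
    intro i hi
    simp only [Finset.mem_insert, Finset.mem_singleton] at hi
    rcases hi with rfl | rfl <;> simp [Nat.lt_succ_iff]
  have hsum : ∑ i ∈ ({0, n} : Finset ℕ), x ^ i / i.factorial ≤
      ∑ i ∈ Finset.range (n + 1), x ^ i / i.factorial := by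
    apply Finset.sum_le_sum_of_subset_of_nonneg hsub
    intro i _ _
    positivity
  rw [Finset.sum_pair (by omega : (0:ℕ) ≠ n)] at hsum
  simp only [pow_zero, Nat.factorial_zero, Nat.cast_one, div_one] at hsum
  linarith

lemma aux_main (n : ℕ) (hn : 1 ≤ n) (t L Q P D : ℝ)
    (ht0 : 0 < t) (hL0 : 0 < L) (hLt : t ≤ L)
    (hq : 1 + (n:ℝ) ^ n / n.factorial * t ^ n ≤ Q) (hQP : Q ≤ P) (hD : D ≤ (1 - t) * L) :
    t ^ (n + 1) ≤ ((n.factorial : ℝ) / ((n : ℝ) + 1) ^ (n - 1)) * (P * L - D) := by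
  set X := (n:ℝ) ^ n / n.factorial * t ^ n with hX
  have hfact : (0:ℝ) < n.factorial := by positivity
  have hXnn : 0 ≤ X := by positivity
  have h5 : (X + t) * L ≤ Q * L - (1 - t) * L := by
    have h : (X + t + (1 - t)) * L ≤ Q * L :=
      mul_le_mul_of_nonneg_right (by linarith) hL0.le
    nlinarith [h]
  have h7 : X * t ≤ (X + t) * L := by
    nlinarith [mul_nonneg hXnn (sub_nonneg.2 hLt), mul_pos ht0 hL0]
  have h8 : Q * L ≤ P * L := mul_le_mul_of_nonneg_right hQP hL0.le
  have hchain : X * t ≤ P * L - D := by linarith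
  have hXt : X * t = (n:ℝ) ^ n / n.factorial * t ^ (n + 1) := by
    rw [hX, pow_succ]; ring
  have hC : (0:ℝ) < (n.factorial : ℝ) / ((n : ℝ) + 1) ^ (n - 1) := by positivity
  have hfinal := mul_le_mul_of_nonneg_left hchain hC.le
  rw [hXt] at hfinal
  refine le_trans ?_ hfinal
  have hsimp : ((n.factorial : ℝ) / ((n : ℝ) + 1) ^ (n - 1)) *
      ((n:ℝ) ^ n / n.factorial * t ^ (n + 1)) =
      ((n:ℝ) ^ n / ((n : ℝ) + 1) ^ (n - 1)) * t ^ (n + 1) := by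
    field_simp
  rw [hsimp]
  have h9 : (1:ℝ) ≤ (n:ℝ) ^ n / ((n : ℝ) + 1) ^ (n - 1) := by
    rw [le_div_iff₀ (by positivity)]
    simpa using aux_real_pow n hn
  nlinarith [pow_nonneg ht0.le (n + 1)]

theorem stmt11 (a b : ℝ) (hab : a < b)
    (f : ℝ → ℝ)
    (hf_diff : DifferentiableOn ℝ f (Set.Icc a b))
    (hf_diff2 : DifferentiableOn ℝ (derivWithin f (Set.Icc a b)) (Set.Icc a b))
    (hf_pos : ∀ x ∈ Set.Icc a b, 0 < f x)
    (hf'a : 0 < derivWithin f (Set.Icc a b) a)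
    (hf''_nonneg : ∀ x ∈ Set.Icc a b,
      0 ≤ derivWithin (derivWithin f (Set.Icc a b)) (Set.Icc a b) x)
    (hlog_conv : ConvexOn ℝ (Set.Icc a b) (fun x => Real.log (f x)))
    (n : ℕ) (hn : 1 ≤ n) :
    (1 - f a / f b) ^ (n + 1) ≤
      ((n.factorial : ℝ) / ((n : ℝ) + 1) ^ (n - 1)) *
        ((derivWithin f (Set.Icc a b) b ^ n / derivWithin f (Set.Icc a b) a ^ n) *
            Real.log (f b / f a) -
          (b - a) * derivWithin f (Set.Icc a b) a / f b) := by
  have ha : a ∈ Set.Icc a b := Set.left_mem_Icc.2 hab.le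
  have hb : b ∈ Set.Icc a b := Set.right_mem_Icc.2 hab.le
  set A := derivWithin f (Set.Icc a b) a with hAdef
  set B := derivWithin f (Set.Icc a b) b with hBdef
  have hFa : 0 < f a := hf_pos a ha
  have hFb : 0 < f b := hf_pos b hb
  have hba : (0:ℝ) < b - a := sub_pos.2 hab
  -- derivative of log ∘ f at the endpoints
  have hga : HasDerivWithinAt (fun x => Real.log (f x)) (A / f a) (Set.Icc a b) a :=
    (hf_diff a ha).hasDerivWithinAt.log hFa.ne'
  have hgb : HasDerivWithinAt (fun x => Real.log (f x)) (B / f b) (Set.Icc a b) b :=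
    (hf_diff b hb).hasDerivWithinAt.log hFb.ne'
  have h1 : A / f a ≤ (Real.log (f b) - Real.log (f a)) / (b - a) := by
    have h := hlog_conv.le_slope_of_hasDerivWithinAt ha hb hab hga
    rwa [slope_def_field] at h
  have h2 : (Real.log (f b) - Real.log (f a)) / (b - a) ≤ B / f b := by
    have h := hlog_conv.slope_le_of_hasDerivWithinAt ha hb hab hgb
    rwa [slope_def_field] at h
  have hLeq : Real.log (f b / f a) = Real.log (f b) - Real.log (f a) :=
    Real.log_div hFb.ne' hFa.ne'
  have hL1 : (b - a) * (A / f a) ≤ Real.log (f b / f a) := by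
    rw [hLeq]
    have h := (le_div_iff₀ hba).mp h1
    linarith
  have hL0 : 0 < Real.log (f b / f a) := lt_of_lt_of_le (by positivity) hL1
  have hfafb : f a < f b := by
    have h3 : (1:ℝ) < f b / f a := (Real.log_pos_iff (by positivity)).mp hL0
    exact (one_lt_div hFa).mp h3
  have ht0 : 0 < 1 - f a / f b := by
    have h : f a / f b < 1 := (div_lt_one hFb).2 hfafb
    linarith
  -- t ≤ L
  have hLt : 1 - f a / f b ≤ Real.log (f b / f a) := by
    have h := Real.log_le_sub_one_of_pos (div_pos hFa hFb)
    rw [Real.log_div hFa.ne' hFb.ne'] at h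
    rw [hLeq]
    linarith
  -- exp t ≤ f b / f a
  have hexp1 : Real.exp (1 - f a / f b) ≤ f b / f a := by
    have h := Real.add_one_le_exp (-(1 - f a / f b))
    rw [Real.exp_neg] at h
    have het : (0:ℝ) < Real.exp (1 - f a / f b) := Real.exp_pos _
    have h4 : Real.exp (1 - f a / f b) * (f a / f b) ≤ 1 := by
      have h9 := mul_le_mul_of_nonneg_left h het.le
      rw [mul_inv_cancel₀ het.ne'] at h9
      nlinarith [h9]
    have h5 := mul_le_mul_of_nonneg_right h4 hFb.le
    rw [mul_assoc, div_mul_cancel₀ (f a) hFb.ne', one_mul] at h5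
    exact (le_div_iff₀ hFa).mpr h5
  have hq : 1 + (n:ℝ) ^ n / n.factorial * (1 - f a / f b) ^ n ≤ (f b / f a) ^ n := by
    have hexpn : Real.exp ((n:ℝ) * (1 - f a / f b)) ≤ (f b / f a) ^ n := by
      rw [Real.exp_nat_mul]
      exact pow_le_pow_left₀ (Real.exp_pos _).le hexp1 n
    have hsumexp := aux_exp ((n:ℝ) * (1 - f a / f b)) (by positivity) n hn
    have hcoef : ((n:ℝ) * (1 - f a / f b)) ^ n / n.factorial =
        (n:ℝ) ^ n / n.factorial * (1 - f a / f b) ^ n := by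
      rw [mul_pow]; ring
    rw [hcoef] at hsumexp
    exact hsumexp.trans hexpn
  -- Q ≤ P
  have hQP : (f b / f a) ^ n ≤ B ^ n / A ^ n := by
    have hBA : f b / f a ≤ B / A := by
      have h3 : A / f a ≤ B / f b := h1.trans h2
      rw [div_le_div_iff₀ hFa hFb] at h3
      rw [div_le_div_iff₀ hFa hf'a]
      linarith
    rw [← div_pow]
    exact pow_le_pow_left₀ (by positivity) hBA n
  -- D bound
  have hD : (b - a) * A / f b ≤ (1 - (1 - f a / f b)) * Real.log (f b / f a) := by
    have h4 : (f a / f b) * ((b - a) * (A / f a)) ≤ (f a / f b) * Real.log (f b / f a) :=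
      mul_le_mul_of_nonneg_left hL1 (by positivity)
    have heq : (f a / f b) * ((b - a) * (A / f a)) = (b - a) * A / f b := by
      field_simp
    rw [heq] at h4
    calc (b - a) * A / f b ≤ (f a / f b) * Real.log (f b / f a) := h4
      _ = (1 - (1 - f a / f b)) * Real.log (f b / f a) := by ring
  exact aux_main n hn (1 - f a / f b) (Real.log (f b / f a)) ((f b / f a) ^ n)
    (B ^ n / A ^ n) ((b - a) * A / f b) ht0 hL0 hLt hq hQP hD
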